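/- arXiv:0911.4957 — 5 statements merged into one kernel-verified Lean document; each statement's English description precedes it below -/
import Mathlib

section
/- Let a, a', b, b' be points of the upper half-plane ℍ with a ≠ a' and b ≠ b'. If the perpendicular bisector sets coincide, i.e. {x ∈ ℍ : dist(x,a) = dist(x,a')} = {x ∈ ℍ : dist(x,b) = dist(x,b')}, then dist(a,b) = dist(a',b'). -/
open UpperHalfPlane

/-- Distances in ℍ agree iff the corresponding `normSq`-cross-products agree. -/
lemma aux_dist_iff (p q r s : ℍ) : dist p q = dist r s ↔
    Complex.normSq ((p : ℂ) - q) * (r.im * s.im)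
      = Complex.normSq ((r : ℂ) - s) * (p.im * q.im) := by
  have hpq : (0:ℝ) ≤ dist (p : ℂ) q / (2 * Real.sqrt (p.im * q.im)) := by positivity
  have hrs : (0:ℝ) ≤ dist (r : ℂ) s / (2 * Real.sqrt (r.im * s.im)) := by positivity
  rw [UpperHalfPlane.dist_eq, UpperHalfPlane.dist_eq, mul_right_inj' (two_ne_zero),
    Real.arsinh_inj, ← sq_eq_sq₀ hpq hrs]
  have e1 : (dist (p : ℂ) q / (2 * Real.sqrt (p.im * q.im))) ^ 2
      = Complex.normSq ((p : ℂ) - q) / (4 * (p.im * q.im)) := by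
    rw [div_pow, Complex.dist_eq, Complex.sq_norm, mul_pow,
      Real.sq_sqrt (by positivity : (0:ℝ) ≤ p.im * q.im)]
    norm_num
  have e2 : (dist (r : ℂ) s / (2 * Real.sqrt (r.im * s.im))) ^ 2
      = Complex.normSq ((r : ℂ) - s) / (4 * (r.im * s.im)) := by
    rw [div_pow, Complex.dist_eq, Complex.sq_norm, mul_pow,
      Real.sq_sqrt (by positivity : (0:ℝ) ≤ r.im * s.im)]
    norm_num
  rw [e1, e2, div_eq_div_iff (by positivity) (by positivity)]
  constructor <;> intro h <;> nlinarith [h]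

/-- Two circles/lines (orthogonal to the real axis) with the same nonempty trace in the upper
half-plane have proportional coefficients. -/
lemma aux_prop (A₁ M₁ C₁ A₂ M₂ C₂ : ℝ) (hd1 : 0 < M₁ ^ 2 - A₁ * C₁)
    (hd2 : 0 < M₂ ^ 2 - A₂ * C₂)
    (H : ∀ x y : ℝ, 0 < y →
      (A₁ * (x ^ 2 + y ^ 2) - 2 * M₁ * x + C₁ = 0 ↔
        A₂ * (x ^ 2 + y ^ 2) - 2 * M₂ * x + C₂ = 0)) :
    ∃ t : ℝ, t ≠ 0 ∧ A₁ = t * A₂ ∧ M₁ = t * M₂ ∧ C₁ = t * C₂ := by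
  by_cases hA : A₁ = 0
  · have hM1 : M₁ ≠ 0 := by intro h0; rw [hA, h0] at hd1; nlinarith
    set x₀ : ℝ := C₁ / (2 * M₁) with hx₀
    have hsat : ∀ y : ℝ, 0 < y → A₁ * (x₀ ^ 2 + y ^ 2) - 2 * M₁ * x₀ + C₁ = 0 := by
      intro y hy
      rw [hA, hx₀]
      field_simp
      ring
    have h1 := (H x₀ 1 one_pos).mp (hsat 1 one_pos)
    have h2 := (H x₀ 2 two_pos).mp (hsat 2 two_pos)
    have hA2 : A₂ = 0 := by nlinarith
    have hM2 : M₂ ≠ 0 := by intro h0; rw [hA2, h0] at hd2; nlinarith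
    refine ⟨M₁ / M₂, div_ne_zero hM1 hM2, ?_, ?_, ?_⟩
    · rw [hA, hA2]; ring
    · field_simp
    · rw [hA2] at h1
      have hC2 : C₂ = 2 * M₂ * x₀ := by nlinarith
      rw [hC2, hx₀]
      field_simp
  · -- circle case
    set c : ℝ := M₁ / A₁ with hc
    have hr2pos : 0 < (M₁ ^ 2 - A₁ * C₁) / A₁ ^ 2 := by positivity
    set r : ℝ := Real.sqrt ((M₁ ^ 2 - A₁ * C₁) / A₁ ^ 2) with hr
    have hrpos : 0 < r := Real.sqrt_pos.mpr hr2pos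
    have hrsq : r ^ 2 = (M₁ ^ 2 - A₁ * C₁) / A₁ ^ 2 := Real.sq_sqrt hr2pos.le
    set yp : ℝ := Real.sqrt (3 * r ^ 2 / 4) with hyp
    have hyppos : 0 < yp := Real.sqrt_pos.mpr (by positivity)
    have hypsq : yp ^ 2 = 3 * r ^ 2 / 4 := Real.sq_sqrt (by positivity)
    -- the three points (c, r), (c + r/2, yp), (c - r/2, yp) satisfy equation 1
    have hsat : ∀ u : ℝ, A₁ * ((c + r * u) ^ 2 + (r ^ 2 - r ^ 2 * u ^ 2)) -
        2 * M₁ * (c + r * u) + C₁ = 0 := by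
      intro u
      have : A₁ * ((c + r * u) ^ 2 + (r ^ 2 - r ^ 2 * u ^ 2)) - 2 * M₁ * (c + r * u) + C₁
          = A₁ * (c ^ 2 + r ^ 2) - 2 * M₁ * c + C₁ + 2 * r * u * (A₁ * c - M₁) := by ring
      rw [this, hc, hrsq]
      field_simp
      ring
    have key : ∀ u : ℝ, u ^ 2 < 1 →
        A₂ * ((c + r * u) ^ 2 + (r ^ 2 - r ^ 2 * u ^ 2)) - 2 * M₂ * (c + r * u) + C₂ = 0 := by
      intro u hu1
      set y : ℝ := Real.sqrt (r ^ 2 - r ^ 2 * u ^ 2) with hy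
      have hy2pos : 0 < r ^ 2 - r ^ 2 * u ^ 2 := by nlinarith
      have hypos : 0 < y := Real.sqrt_pos.mpr hy2pos
      have hysq : y ^ 2 = r ^ 2 - r ^ 2 * u ^ 2 := Real.sq_sqrt hy2pos.le
      have h1 : A₁ * ((c + r * u) ^ 2 + y ^ 2) - 2 * M₁ * (c + r * u) + C₁ = 0 := by
        rw [hysq]; exact hsat u
      have h2 := (H (c + r * u) y hypos).mp h1
      rw [hysq] at h2
      exact h2
    have k0 := key 0 (by norm_num)
    have kp := key (1/2) (by norm_num)
    have km := key (-(1/2)) (by norm_num)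
    have hM2 : M₂ = A₂ * c := by
      have h5 : (2 * r) * M₂ = (2 * r) * (A₂ * c) := by linear_combination km - kp
      exact mul_left_cancel₀ (by positivity) h5
    have hC2 : C₂ = A₂ * (c ^ 2 - r ^ 2) := by linear_combination k0 + 2 * c * hM2
    have hA2 : A₂ ≠ 0 := by
      intro h0
      rw [h0] at hM2 hC2
      simp at hM2 hC2
      rw [hM2, hC2] at hd2
      nlinarith
    refine ⟨A₁ / A₂, div_ne_zero hA hA2, ?_, ?_, ?_⟩
    · field_simp
    · rw [hM2, hc]; field_simp
    · rw [hC2]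
      have hC1 : C₁ = A₁ * (c ^ 2 - r ^ 2) := by
        rw [hc, hrsq]
        field_simp
        ring
      rw [hC1]
      field_simp

/-- If the perpendicular bisector of the pair `(a, a')` coincides with the perpendicular
bisector of the pair `(b, b')` in ℍ, then `dist a b = dist a' b'`. -/
theorem dist_eq_of_bisector_eq (a a' b b' : ℍ) (ha : a ≠ a') (hb : b ≠ b')
    (h : {x : ℍ | dist x a = dist x a'} = {x : ℍ | dist x b = dist x b'}) :
    dist a b = dist a' b' := by
  have hposa : 0 < (a.re - a'.re) ^ 2 + (a.im - a'.im) ^ 2 := by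
    rcases not_and_or.mp (fun hh : a.re = a'.re ∧ a.im = a'.im =>
        ha (UpperHalfPlane.ext' hh.1 hh.2)) with h1 | h1
    · have h2 : 0 < (a.re - a'.re) * (a.re - a'.re) := mul_self_pos.mpr (sub_ne_zero.mpr h1)
      nlinarith [sq_nonneg (a.im - a'.im)]
    · have h2 : 0 < (a.im - a'.im) * (a.im - a'.im) := mul_self_pos.mpr (sub_ne_zero.mpr h1)
      nlinarith [sq_nonneg (a.re - a'.re)]
  have hposb : 0 < (b.re - b'.re) ^ 2 + (b.im - b'.im) ^ 2 := by
    rcases not_and_or.mp (fun hh : b.re = b'.re ∧ b.im = b'.im =>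
        hb (UpperHalfPlane.ext' hh.1 hh.2)) with h1 | h1
    · have h2 : 0 < (b.re - b'.re) * (b.re - b'.re) := mul_self_pos.mpr (sub_ne_zero.mpr h1)
      nlinarith [sq_nonneg (b.im - b'.im)]
    · have h2 : 0 < (b.im - b'.im) * (b.im - b'.im) := mul_self_pos.mpr (sub_ne_zero.mpr h1)
      nlinarith [sq_nonneg (b.re - b'.re)]
  have hd1 : 0 < (a.re * a'.im - a'.re * a.im) ^ 2 -
      (a'.im - a.im) * ((a.re ^ 2 + a.im ^ 2) * a'.im - (a'.re ^ 2 + a'.im ^ 2) * a.im) := by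
    have key : (a.re * a'.im - a'.re * a.im) ^ 2 -
        (a'.im - a.im) * ((a.re ^ 2 + a.im ^ 2) * a'.im - (a'.re ^ 2 + a'.im ^ 2) * a.im)
        = (a.im * a'.im) * ((a.re - a'.re) ^ 2 + (a.im - a'.im) ^ 2) := by ring
    rw [key]
    exact mul_pos (mul_pos a.im_pos a'.im_pos) hposa
  have hd2 : 0 < (b.re * b'.im - b'.re * b.im) ^ 2 -
      (b'.im - b.im) * ((b.re ^ 2 + b.im ^ 2) * b'.im - (b'.re ^ 2 + b'.im ^ 2) * b.im) := by
    have key : (b.re * b'.im - b'.re * b.im) ^ 2 -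
        (b'.im - b.im) * ((b.re ^ 2 + b.im ^ 2) * b'.im - (b'.re ^ 2 + b'.im ^ 2) * b.im)
        = (b.im * b'.im) * ((b.re - b'.re) ^ 2 + (b.im - b'.im) ^ 2) := by ring
    rw [key]
    exact mul_pos (mul_pos b.im_pos b'.im_pos) hposb
  have H : ∀ x y : ℝ, 0 < y →
      ((a'.im - a.im) * (x ^ 2 + y ^ 2) - 2 * (a.re * a'.im - a'.re * a.im) * x +
          ((a.re ^ 2 + a.im ^ 2) * a'.im - (a'.re ^ 2 + a'.im ^ 2) * a.im) = 0 ↔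
        (b'.im - b.im) * (x ^ 2 + y ^ 2) - 2 * (b.re * b'.im - b'.re * b.im) * x +
          ((b.re ^ 2 + b.im ^ 2) * b'.im - (b'.re ^ 2 + b'.im ^ 2) * b.im) = 0) := by
    intro x y hy
    have hzim : 0 < (Complex.I.im : ℝ) * y + (x : ℝ) * 0 + 0 := by simp [hy]
    have hzim' : 0 < ((x : ℂ) + (y : ℂ) * Complex.I).im := by
      simp [Complex.add_im, Complex.mul_im, hy]
    set z : ℍ := UpperHalfPlane.mk ((x : ℂ) + (y : ℂ) * Complex.I) hzim' with hzdef
    have hmem := Set.ext_iff.mp h z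
    simp only [Set.mem_setOf_eq] at hmem
    rw [aux_dist_iff z a z a', aux_dist_iff z b z b'] at hmem
    have hzim2 : z.im = y := by
      rw [hzdef, UpperHalfPlane.mk_im]
      simp [Complex.add_im, Complex.mul_im]
    have hzre2 : z.re = x := by
      rw [hzdef, UpperHalfPlane.mk_re]
      simp [Complex.add_re, Complex.mul_re]
    have hzcoe : (z : ℂ) = (x : ℂ) + (y : ℂ) * Complex.I := by
      rw [hzdef, UpperHalfPlane.coe_mk]
    have t1 : (Complex.normSq ((z : ℂ) - a) * (z.im * a'.im)
        = Complex.normSq ((z : ℂ) - a') * (z.im * a.im)) ↔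
        ((a'.im - a.im) * (x ^ 2 + y ^ 2) - 2 * (a.re * a'.im - a'.re * a.im) * x +
          ((a.re ^ 2 + a.im ^ 2) * a'.im - (a'.re ^ 2 + a'.im ^ 2) * a.im) = 0) := by
      rw [← sub_eq_zero]
      have e1 : Complex.normSq ((z : ℂ) - a) * (z.im * a'.im)
          - Complex.normSq ((z : ℂ) - a') * (z.im * a.im)
          = y * ((a'.im - a.im) * (x ^ 2 + y ^ 2) - 2 * (a.re * a'.im - a'.re * a.im) * x +
          ((a.re ^ 2 + a.im ^ 2) * a'.im - (a'.re ^ 2 + a'.im ^ 2) * a.im)) := by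
        rw [hzcoe, hzim2]
        simp only [Complex.normSq_apply, Complex.sub_re, Complex.sub_im, Complex.add_re,
          Complex.add_im, Complex.mul_re, Complex.mul_im, Complex.I_re, Complex.I_im,
          Complex.ofReal_re, Complex.ofReal_im, UpperHalfPlane.coe_re, UpperHalfPlane.coe_im]
        ring
      rw [e1, mul_eq_zero]
      exact or_iff_right hy.ne'
    have t2 : (Complex.normSq ((z : ℂ) - b) * (z.im * b'.im)
        = Complex.normSq ((z : ℂ) - b') * (z.im * b.im)) ↔
        ((b'.im - b.im) * (x ^ 2 + y ^ 2) - 2 * (b.re * b'.im - b'.re * b.im) * x +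
          ((b.re ^ 2 + b.im ^ 2) * b'.im - (b'.re ^ 2 + b'.im ^ 2) * b.im) = 0) := by
      rw [← sub_eq_zero]
      have e1 : Complex.normSq ((z : ℂ) - b) * (z.im * b'.im)
          - Complex.normSq ((z : ℂ) - b') * (z.im * b.im)
          = y * ((b'.im - b.im) * (x ^ 2 + y ^ 2) - 2 * (b.re * b'.im - b'.re * b.im) * x +
          ((b.re ^ 2 + b.im ^ 2) * b'.im - (b'.re ^ 2 + b'.im ^ 2) * b.im)) := by
        rw [hzcoe, hzim2]
        simp only [Complex.normSq_apply, Complex.sub_re, Complex.sub_im, Complex.add_re,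
          Complex.add_im, Complex.mul_re, Complex.mul_im, Complex.I_re, Complex.I_im,
          Complex.ofReal_re, Complex.ofReal_im, UpperHalfPlane.coe_re, UpperHalfPlane.coe_im]
        ring
      rw [e1, mul_eq_zero]
      exact or_iff_right hy.ne'
    exact t1.symm.trans (hmem.trans t2)
  obtain ⟨t, ht, e1, e2, e3⟩ := aux_prop _ _ _ _ _ _ hd1 hd2 H
  rw [aux_dist_iff a b a' b']
  apply mul_left_cancel₀ ht
  simp only [Complex.normSq_apply, Complex.sub_re, Complex.sub_im,
    UpperHalfPlane.coe_re, UpperHalfPlane.coe_im]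
  linear_combination
    ((t * ((b.re ^ 2 + b.im ^ 2) * b'.im + (b'.re ^ 2 + b'.im ^ 2) * b.im) -
      ((a.re ^ 2 + a.im ^ 2) * a'.im + (a'.re ^ 2 + a'.im ^ 2) * a.im)) / 2) * e1 +
    ((a.re * a'.im + a'.re * a.im) - t * (b.re * b'.im + b'.re * b.im)) * e2 +
    ((t * (b.im + b'.im) - (a.im + a'.im)) / 2) * e3
end

section
/- Let Γ be a subgroup of SL(2,ℝ), let z₀, z₁ ∈ ℍ, and let γ₀, γ₁ ∈ Γ with γ₀⁻¹•z₀ ≠ z₀ and γ₁⁻¹•z₁ ≠ z₁. Suppose the perpendicular bisector of the pair (z₀, γ₀⁻¹•z₀) equals the perpendicular bisector of the pair (z₁, γ₁⁻¹•z₁) as subsets of ℍ, and that γ₁•(γ₀⁻¹•z₀) ≠ z₀. Then dist(γ₁•(γ₀⁻¹•z₀), z₁) = dist(z₀, z₁), and consequently z₁ does not lie in the topological interior of the Dirichlet set D(Γ, z₀). (This is the key step showing that a domain which is a Dirichlet domain for two centers has its sides identified the same way for each center.) -/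
open UpperHalfPlane Matrix Complex
open scoped MatrixGroups

/-- The Dirichlet set of a subgroup `Γ ≤ SL(2,ℝ)` centered at `z₀ ∈ ℍ`. -/
def dirichletSet (Γ : Subgroup SL(2, ℝ)) (z₀ : ℍ) : Set ℍ :=
  {x : ℍ | ∀ γ ∈ Γ, dist x z₀ ≤ dist x (γ • z₀)}

lemma dist_le_dist_iff' (x y z w : ℍ) :
    dist x y ≤ dist z w ↔
      Complex.normSq ((x:ℂ) - y) * (z.im * w.im) ≤ Complex.normSq ((z:ℂ) - w) * (x.im * y.im) := by
  have h1 : dist x y ≤ dist z w ↔ Real.cosh (dist x y) ≤ Real.cosh (dist z w) := by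
    rw [Real.cosh_le_cosh, _root_.abs_of_nonneg dist_nonneg, _root_.abs_of_nonneg dist_nonneg]
  rw [h1, cosh_dist, cosh_dist, add_le_add_iff_left,
    div_le_div_iff₀ (by positivity) (by positivity),
    Complex.dist_eq, Complex.dist_eq, Complex.sq_norm, Complex.sq_norm]
  constructor <;> intro h <;> nlinarith [x.im_pos, y.im_pos, z.im_pos, w.im_pos]

lemma dist_eq_dist_iff' (x y z w : ℍ) :
    dist x y = dist z w ↔
      Complex.normSq ((x:ℂ) - y) * (z.im * w.im) = Complex.normSq ((z:ℂ) - w) * (x.im * y.im) := by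
  rw [le_antisymm_iff, le_antisymm_iff, dist_le_dist_iff', dist_le_dist_iff']

/-- Expansion of the bisector quadratic. -/
lemma Fexp (p q : ℍ) (x : ℂ) :
    Complex.normSq (x - p) * q.im - Complex.normSq (x - q) * p.im =
      (q.im - p.im) * Complex.normSq x + (2*(q.re*p.im - p.re*q.im)) * x.re
        + (Complex.normSq (p:ℂ) * q.im - Complex.normSq (q:ℂ) * p.im) := by
  simp only [Complex.normSq_apply, Complex.sub_re, Complex.sub_im, coe_re, coe_im]
  ring

lemma disc_eq (p q : ℍ) :
    (2*(q.re*p.im - p.re*q.im))^2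
        - 4*(q.im - p.im)*(Complex.normSq (p:ℂ) * q.im - Complex.normSq (q:ℂ) * p.im) =
      4 * (p.im*q.im) * Complex.normSq ((p:ℂ) - (q:ℂ)) := by
  simp only [Complex.normSq_apply, Complex.sub_re, Complex.sub_im, coe_re, coe_im]
  ring

lemma exists_two_points (A B C : ℝ) (hd : 0 < B^2 - 4*A*C) :
    ∃ x₁ x₂ : ℍ, x₁ ≠ x₂ ∧ A * Complex.normSq (x₁:ℂ) + B * (x₁:ℂ).re + C = 0 ∧
      A * Complex.normSq (x₂:ℂ) + B * (x₂:ℂ).re + C = 0 := by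
  rcases eq_or_ne A 0 with hA | hA
  · subst hA
    have hB : B ≠ 0 := by intro h; rw [h] at hd; nlinarith
    have i1 : 0 < (⟨-C/B, 1⟩:ℂ).im := by norm_num
    have i2 : 0 < (⟨-C/B, 2⟩:ℂ).im := by norm_num
    refine ⟨⟨⟨-C/B, 1⟩, i1⟩, ⟨⟨-C/B, 2⟩, i2⟩, ?_, ?_, ?_⟩
    · intro h; have := congrArg (fun z : ℍ => (z:ℂ).im) h; norm_num at this
    · simp [Complex.normSq_apply]; field_simp; ring
    · simp [Complex.normSq_apply]; field_simp; ring
  · set ρ : ℝ := Real.sqrt ((B^2 - 4*A*C)/(4*A^2)) with hρ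
    have hρpos : 0 < ρ := Real.sqrt_pos.2 (by positivity)
    have hnn : (0:ℝ) ≤ (B^2 - 4*A*C)/(4*A^2) := by positivity
    have hρsq : ρ^2 = (B^2 - 4*A*C)/(4*A^2) := Real.sq_sqrt hnn
    have hρ2 : 4*A^2*ρ^2 = B^2 - 4*A*C := by
      rw [hρsq]; field_simp
    have him2 : 0 < (⟨-B/(2*A) + 3*ρ/5, 4*ρ/5⟩ : ℂ).im := by
      show (0:ℝ) < 4*ρ/5; positivity
    refine ⟨⟨⟨-B/(2*A), ρ⟩, hρpos⟩, ⟨⟨-B/(2*A) + 3*ρ/5, 4*ρ/5⟩, him2⟩, ?_, ?_, ?_⟩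
    · intro h
      have h5 := congrArg (fun z : ℍ => (z:ℂ).im) h
      simp only [UpperHalfPlane.coe_mk] at h5
      have : ρ = 4*ρ/5 := h5
      linarith
    · show A * Complex.normSq ⟨-B/(2*A), ρ⟩ + B * (-B/(2*A)) + C = 0
      rw [Complex.normSq_mk]
      field_simp
      linear_combination hρ2
    · show A * Complex.normSq ⟨-B/(2*A) + 3*ρ/5, 4*ρ/5⟩ + B * (-B/(2*A) + 3*ρ/5) + C = 0
      rw [Complex.normSq_mk]
      field_simp
      linear_combination 25 * hρ2

lemma propor {A B C A' B' C' : ℝ} {x₁ x₂ : ℍ} (hne : x₁ ≠ x₂)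
    (h1 : A * Complex.normSq (x₁:ℂ) + B * (x₁:ℂ).re + C = 0)
    (h2 : A * Complex.normSq (x₂:ℂ) + B * (x₂:ℂ).re + C = 0)
    (h1' : A' * Complex.normSq (x₁:ℂ) + B' * (x₁:ℂ).re + C' = 0)
    (h2' : A' * Complex.normSq (x₂:ℂ) + B' * (x₂:ℂ).re + C' = 0)
    (hAB : A ≠ 0 ∨ B ≠ 0) :
    ∃ l : ℝ, A' = l * A ∧ B' = l * B ∧ C' = l * C := by
  set u₁ := Complex.normSq (x₁:ℂ) with hu₁
  set u₂ := Complex.normSq (x₂:ℂ) with hu₂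
  set v₁ := (x₁:ℂ).re with hv₁
  set v₂ := (x₂:ℂ).re with hv₂
  have hI : ¬ (u₁ = u₂ ∧ v₁ = v₂) := by
    rintro ⟨hu, hv⟩
    apply hne
    apply UpperHalfPlane.ext
    apply Complex.ext hv
    have e1 : u₁ = v₁^2 + (x₁:ℂ).im^2 := by
      rw [hu₁, hv₁, Complex.normSq_apply]; ring
    have e2 : u₂ = v₂^2 + (x₂:ℂ).im^2 := by
      rw [hu₂, hv₂, Complex.normSq_apply]; ring
    have h9 : ((x₁:ℂ).im - (x₂:ℂ).im) * ((x₁:ℂ).im + (x₂:ℂ).im) = 0 := by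
      linear_combination -e1 + e2 + hu - (v₁ + v₂) * hv
    have p1 : 0 < (x₁:ℂ).im := x₁.2
    have p2 : 0 < (x₂:ℂ).im := x₂.2
    rcases mul_eq_zero.mp h9 with h | h
    · linarith
    · linarith
  have e : A * (u₁ - u₂) + B * (v₁ - v₂) = 0 := by linear_combination h1 - h2
  have e' : A' * (u₁ - u₂) + B' * (v₁ - v₂) = 0 := by linear_combination h1' - h2'
  have hdet : A' * B = A * B' := by
    rcases eq_or_ne (u₁ - u₂) 0 with hu | hu
    · rcases eq_or_ne (v₁ - v₂) 0 with hv | hv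
      · exact absurd ⟨by linarith [sub_eq_zero.mp hu], by linarith [sub_eq_zero.mp hv]⟩ hI
      · have hB : B = 0 := by
          have hB0 : B * (v₁ - v₂) = 0 := by linear_combination e - A * hu
          rcases mul_eq_zero.mp hB0 with h | h
          · exact h
          · exact absurd h hv
        have hB' : B' = 0 := by
          have hB0 : B' * (v₁ - v₂) = 0 := by linear_combination e' - A' * hu
          rcases mul_eq_zero.mp hB0 with h | h
          · exact h
          · exact absurd h hv
        rw [hB, hB']; ring
    · have h0 : (A' * B - A * B') * (u₁ - u₂) = 0 := by linear_combination B * e' - B' * e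
      rcases mul_eq_zero.mp h0 with h | h
      · linarith
      · exact absurd h hu
  have hC : C = -(A * u₁ + B * v₁) := by linarith
  have hC' : C' = -(A' * u₁ + B' * v₁) := by linarith
  rcases hAB with hA | hB
  · refine ⟨A'/A, by field_simp, ?_, ?_⟩
    · field_simp; linear_combination -hdet
    · rw [hC, hC']; field_simp; linear_combination v₁ * hdet
  · refine ⟨B'/B, ?_, by field_simp, ?_⟩
    · field_simp; linear_combination hdet
    · rw [hC, hC']; field_simp; linear_combination (-u₁) * hdet

lemma normSq_sub_comm (u v : ℂ) : Complex.normSq (u - v) = Complex.normSq (v - u) := by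
  rw [← Complex.normSq_neg, neg_sub]

lemma bis_eq_iff (p q x : ℍ) : dist x p = dist x q ↔
    (q.im - p.im) * Complex.normSq (x:ℂ) + (2*(q.re*p.im - p.re*q.im)) * (x:ℂ).re
      + (Complex.normSq (p:ℂ) * q.im - Complex.normSq (q:ℂ) * p.im) = 0 := by
  rw [dist_eq_dist_iff', ← Fexp p q (x:ℂ)]
  have hx := x.im_pos
  constructor
  · intro h
    have h2 : x.im * (Complex.normSq ((x:ℂ) - p) * q.im - Complex.normSq ((x:ℂ) - q) * p.im)
        = 0 := by linear_combination h
    rcases mul_eq_zero.mp h2 with h | h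
    · linarith
    · linarith
  · intro h
    linear_combination x.im * h

lemma bis_le_iff (p q x : ℍ) : dist x p ≤ dist x q ↔
    (q.im - p.im) * Complex.normSq (x:ℂ) + (2*(q.re*p.im - p.re*q.im)) * (x:ℂ).re
      + (Complex.normSq (p:ℂ) * q.im - Complex.normSq (q:ℂ) * p.im) ≤ 0 := by
  rw [dist_le_dist_iff', ← Fexp p q (x:ℂ)]
  have hx := x.im_pos
  constructor
  · intro h; nlinarith
  · intro h; nlinarith

lemma normSq_coe_sub_pos {p q : ℍ} (h : p ≠ q) : 0 < Complex.normSq ((p:ℂ) - (q:ℂ)) := by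
  apply Complex.normSq_pos.2
  intro hc
  exact h (UpperHalfPlane.ext (sub_eq_zero.mp hc))

lemma sqrt_aux (T M : ℝ) (hM : 0 ≤ M) : T^2*M ≤ (T*(M+1))^2 := by
  nlinarith [sq_nonneg (T*M), mul_nonneg (sq_nonneg T) hM, sq_nonneg T]

set_option maxHeartbeats 1000000 in
/-- If a side of `P` is simultaneously the bisector of `(z₀, γ₀⁻¹•z₀)` and of
`(z₁, γ₁⁻¹•z₁)`, and `γ₁•(γ₀⁻¹•z₀) ≠ z₀`, then `γ₁•(γ₀⁻¹•z₀)` lies at distance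
`dist z₀ z₁` from `z₁`, whence `z₁` is not interior to the Dirichlet set `D(Γ, z₀)`. -/
theorem not_mem_interior_dirichletSet_of_bisectors_eq (Γ : Subgroup SL(2, ℝ))
    (z₀ z₁ : ℍ) (γ₀ γ₁ : SL(2, ℝ)) (h₀ : γ₀ ∈ Γ) (h₁ : γ₁ ∈ Γ)
    (hne₀ : γ₀⁻¹ • z₀ ≠ z₀) (hne₁ : γ₁⁻¹ • z₁ ≠ z₁)
    (hbis : {x : ℍ | dist x z₀ = dist x (γ₀⁻¹ • z₀)} =
      {x : ℍ | dist x z₁ = dist x (γ₁⁻¹ • z₁)})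
    (hne : γ₁ • (γ₀⁻¹ • z₀) ≠ z₀) :
    dist (γ₁ • (γ₀⁻¹ • z₀)) z₁ = dist z₀ z₁ ∧
      z₁ ∉ interior (dirichletSet Γ z₀) := by
  set b : ℍ := γ₀⁻¹ • z₀ with hb
  set d : ℍ := γ₁⁻¹ • z₁ with hd
  set a : ℍ := z₀
  set c : ℍ := z₁
  clear_value b d
  have hbis' : ∀ x : ℍ, dist x a = dist x b ↔ dist x c = dist x d :=
    fun x => Set.ext_iff.mp hbis x
  -- coefficients
  set A₀ : ℝ := b.im - a.im with hA₀
  set B₀ : ℝ := 2*(b.re*a.im - a.re*b.im) with hB₀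
  set C₀ : ℝ := Complex.normSq (a:ℂ) * b.im - Complex.normSq (b:ℂ) * a.im with hC₀
  set A₁ : ℝ := d.im - c.im with hA₁
  set B₁ : ℝ := 2*(d.re*c.im - c.re*d.im) with hB₁
  set C₁ : ℝ := Complex.normSq (c:ℂ) * d.im - Complex.normSq (d:ℂ) * c.im with hC₁
  have hd₀ : 0 < B₀^2 - 4*A₀*C₀ := by
    rw [hA₀, hB₀, hC₀, disc_eq a b]
    have := normSq_coe_sub_pos (show a ≠ b from fun h => hne₀ (h.symm))
    have := a.im_pos; have := b.im_pos
    positivity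
  have hd₁ : 0 < B₁^2 - 4*A₁*C₁ := by
    rw [hA₁, hB₁, hC₁, disc_eq c d]
    have := normSq_coe_sub_pos (show c ≠ d from fun h => hne₁ (h.symm))
    have := c.im_pos; have := d.im_pos
    positivity
  obtain ⟨x₁, x₂, hx12, e1, e2⟩ := exists_two_points A₀ B₀ C₀ hd₀
  have e1' : A₁ * Complex.normSq (x₁:ℂ) + B₁ * (x₁:ℂ).re + C₁ = 0 := by
    rw [hA₁, hB₁, hC₁, ← bis_eq_iff c d x₁]
    rw [← hbis' x₁, bis_eq_iff a b x₁]
    rw [hA₀, hB₀, hC₀] at e1; exact e1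
  have e2' : A₁ * Complex.normSq (x₂:ℂ) + B₁ * (x₂:ℂ).re + C₁ = 0 := by
    rw [hA₁, hB₁, hC₁, ← bis_eq_iff c d x₂]
    rw [← hbis' x₂, bis_eq_iff a b x₂]
    rw [hA₀, hB₀, hC₀] at e2; exact e2
  have hAB₀ : A₀ ≠ 0 ∨ B₀ ≠ 0 := by
    by_contra h
    push_neg at h
    rw [h.1, h.2] at hd₀; nlinarith
  obtain ⟨l, hlA, hlB, hlC⟩ := propor hx12 e1 e2 e1' e2' hAB₀
  have hl : l ≠ 0 := by
    intro h
    rw [h, zero_mul] at hlA hlB hlC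
    rw [hlA, hlB, hlC] at hd₁; nlinarith
  -- E5 : discriminant relation
  have E5 : 4 * (c.im*d.im) * Complex.normSq ((c:ℂ) - (d:ℂ))
      = l^2 * (4 * (a.im*b.im) * Complex.normSq ((a:ℂ) - (b:ℂ))) := by
    rw [← disc_eq a b, ← disc_eq c d]
    rw [← hA₀, ← hB₀, ← hC₀, ← hA₁, ← hB₁, ← hC₁, hlA, hlB, hlC]; ring
  -- F₁ = l • F₀ as functions on ℂ
  have hF : ∀ x : ℂ, Complex.normSq (x - c) * d.im - Complex.normSq (x - d) * c.im
      = l * (Complex.normSq (x - a) * b.im - Complex.normSq (x - b) * a.im) := by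
    intro x
    rw [Fexp a b x, Fexp c d x, ← hA₀, ← hB₀, ← hC₀, ← hA₁, ← hB₁, ← hC₁,
      hlA, hlB, hlC]
    ring
  have E2 := hF (b:ℂ)
  have E3 := hF (c:ℂ)
  simp only [sub_self, Complex.normSq_zero, zero_mul, mul_zero, zero_sub, sub_zero] at E2 E3
  have hα := a.im_pos; have hβ := b.im_pos; have hγ := c.im_pos; have hδ := d.im_pos
  -- the key algebraic consequence
  have h7 : Complex.normSq ((b:ℂ) - c) * (a.im * d.im)
      = Complex.normSq ((a:ℂ) - c) * (b.im * d.im)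
        + l * (a.im * b.im) * Complex.normSq ((a:ℂ) - b) := by
    have h6 : l * (Complex.normSq ((b:ℂ) - c) * (a.im * d.im)
        - (Complex.normSq ((a:ℂ) - c) * (b.im * d.im)
          + l * (a.im * b.im) * Complex.normSq ((a:ℂ) - b))) = 0 := by
      have hca : Complex.normSq ((c:ℂ) - a) = Complex.normSq ((a:ℂ) - c) := normSq_sub_comm _ _
      have hcb : Complex.normSq ((c:ℂ) - b) = Complex.normSq ((b:ℂ) - c) := normSq_sub_comm _ _
      linear_combination d.im * E3 + (1/4) * E5 - l * d.im * a.im * hcb + l * d.im * b.im * hca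
    rcases mul_eq_zero.mp h6 with h | h
    · exact absurd h hl
    · linarith [sub_eq_zero.mp h]
  have G : Complex.normSq ((b:ℂ) - d) * (a.im * c.im)
      = Complex.normSq ((a:ℂ) - c) * (b.im * d.im) := by
    have hba : Complex.normSq ((b:ℂ) - a) = Complex.normSq ((a:ℂ) - b) := normSq_sub_comm _ _
    linear_combination (- a.im) * E2 + h7 - l * a.im * b.im * hba
  -- part 1
  have hcd : γ₁ • d = c := by rw [hd]; exact smul_inv_smul γ₁ z₁
  have part1 : dist (γ₁ • b) c = dist a c := by
    calc dist (γ₁ • b) c = dist (γ₁ • b) (γ₁ • d) := by rw [hcd]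
    _ = dist b d := dist_smul γ₁ b d
    _ = dist a c := by
        rw [dist_eq_dist_iff']
        linear_combination G
  refine ⟨part1, ?_⟩
  intro hint
  set w : ℍ := γ₁ • b with hw
  clear_value w
  have hwa : a ≠ w := fun h => hne h.symm
  set A₂ : ℝ := w.im - a.im with hA₂
  set B₂ : ℝ := 2*(w.re*a.im - a.re*w.im) with hB₂
  set C₂ : ℝ := Complex.normSq (a:ℂ) * w.im - Complex.normSq (w:ℂ) * a.im with hC₂
  clear_value A₂ B₂ C₂
  have hd₂ : 0 < B₂^2 - 4*A₂*C₂ := by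
    rw [hA₂, hB₂, hC₂, disc_eq a w]
    have := normSq_coe_sub_pos hwa
    have := w.im_pos
    positivity
  have hHc : A₂ * Complex.normSq (c:ℂ) + B₂*(c:ℂ).re + C₂ = 0 := by
    rw [hA₂, hB₂, hC₂, ← bis_eq_iff a w c]
    rw [dist_comm c a, dist_comm c w]
    exact part1.symm
  set g₁ : ℝ := 2*A₂*(c:ℂ).re + B₂ with hg₁
  set g₂ : ℝ := 2*A₂*(c:ℂ).im with hg₂
  set m : ℝ := g₁^2 + g₂^2 with hm'
  clear_value g₁ g₂ m
  have hm : 0 < m := by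
    rcases eq_or_ne A₂ 0 with h | h
    · have hB2 : B₂ ≠ 0 := by intro hB; rw [h, hB] at hd₂; norm_num at hd₂
      have hg : g₁ = B₂ := by rw [hg₁, h]; ring
      have h9 : 0 < g₁^2 := by rw [hg]; exact pow_two_pos_of_ne_zero hB2
      rw [hm']; exact add_pos_of_pos_of_nonneg h9 (sq_nonneg g₂)
    · have hg : g₂ ≠ 0 := by
        rw [hg₂, UpperHalfPlane.coe_im]
        have := c.im_pos
        positivity
      have h9 : 0 < g₂^2 := pow_two_pos_of_ne_zero hg
      rw [hm']; exact add_pos_of_nonneg_of_pos (sq_nonneg g₁) h9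
  have hop : IsOpen (((↑) : ℍ → ℂ) '' interior (dirichletSet Γ a)) :=
    UpperHalfPlane.isOpenEmbedding_coe.isOpenMap _ isOpen_interior
  obtain ⟨ε, hε, hball⟩ := Metric.isOpen_iff.mp hop _ ⟨c, hint, rfl⟩
  set t : ℝ := min (ε/(2*(m+1))) (1/(2*(|A₂|+1))) with ht
  clear_value t
  have ht0 : 0 < t := by rw [ht]; exact lt_min (by positivity) (by positivity)
  set u : ℂ := ⟨(c:ℂ).re + t*g₁, (c:ℂ).im + t*g₂⟩ with hu
  have hure : u.re = (c:ℂ).re + t*g₁ := rfl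
  have huim : u.im = (c:ℂ).im + t*g₂ := rfl
  clear_value u
  have husub : u - (c:ℂ) = Complex.mk (t*g₁) (t*g₂) := by
    apply Complex.ext
    · rw [Complex.sub_re, hure]; show (c:ℂ).re + t*g₁ - (c:ℂ).re = t*g₁; ring
    · rw [Complex.sub_im, huim]; show (c:ℂ).im + t*g₂ - (c:ℂ).im = t*g₂; ring
  have hdist : dist u (c:ℂ) < ε := by
    rw [Complex.dist_eq, husub]
    have h1 : ‖Complex.mk (t*g₁) (t*g₂)‖ = Real.sqrt (t^2*m) := by
      rw [Complex.norm_def, Complex.normSq_mk, hm']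
      congr 1
      ring
    rw [h1]
    have h2 : Real.sqrt (t^2*m) ≤ t*(m+1) := by
      have h3 : t^2*m ≤ (t*(m+1))^2 := sqrt_aux t m hm.le
      calc Real.sqrt (t^2*m) ≤ Real.sqrt ((t*(m+1))^2) := Real.sqrt_le_sqrt h3
      _ = t*(m+1) := Real.sqrt_sq (by positivity)
    have h4 : t ≤ ε/(2*(m+1)) := by rw [ht]; exact min_le_left _ _
    have h4' : t * (2*(m+1)) ≤ ε := by
      rw [le_div_iff₀ (by positivity : (0:ℝ) < 2*(m+1))] at h4
      exact h4
    have h11 : t*(2*(m+1)) = 2*(t*(m+1)) := by ring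
    linarith
  obtain ⟨x, hxint, hxcoe⟩ := hball (Metric.mem_ball.mpr hdist)
  -- H is nonpositive on the Dirichlet set
  have hxD : dist x a ≤ dist x w := by
    have hmem : x ∈ dirichletSet Γ a := interior_subset hxint
    have h5 := hmem (γ₁ * γ₀⁻¹) (mul_mem h₁ (inv_mem h₀))
    rwa [show (γ₁ * γ₀⁻¹) • a = w by rw [hw, hb, mul_smul]] at h5
  have hxF : A₂ * Complex.normSq (x:ℂ) + B₂*(x:ℂ).re + C₂ ≤ 0 := by
    rw [hA₂, hB₂, hC₂, ← bis_le_iff a w x]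
    exact hxD
  rw [hxcoe] at hxF
  -- but H u > 0
  have hHu : A₂ * Complex.normSq u + B₂ * u.re + C₂ = t*m*(1+t*A₂) := by
    rw [Complex.normSq_apply, hure, huim, hm', hg₁, hg₂]
    have hc2 : Complex.normSq (c:ℂ) = (c:ℂ).re^2 + (c:ℂ).im^2 := by
      rw [Complex.normSq_apply]; ring
    linear_combination hHc - A₂ * hc2
  have htA : 1 + t*A₂ ≥ 1/2 := by
    have h6 : t ≤ 1/(2*(|A₂|+1)) := by rw [ht]; exact min_le_right _ _
    have h7 : 0 ≤ |A₂| := abs_nonneg A₂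
    have h8 : -|A₂| ≤ A₂ := neg_abs_le A₂
    rw [le_div_iff₀ (by positivity : (0:ℝ) < 2*(|A₂|+1))] at h6
    have h9 : t*(-|A₂|) ≤ t*A₂ := mul_le_mul_of_nonneg_left h8 ht0.le
    have h10 : 0 ≤ t*|A₂| := mul_nonneg ht0.le h7
    have h11 : t*(2*(|A₂|+1)) = 2*(t*|A₂|) + 2*t := by ring
    have h12 : t*(-|A₂|) = -(t*|A₂|) := by ring
    linarith only [h6, h9, h10, h11, h12, ht0]
  have : 0 < t*m*(1+t*A₂) :=
    mul_pos (mul_pos ht0 hm) (by linarith)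
  rw [hHu] at hxF
  linarith only [hxF, this]
end

section
/- Let Γ be a subgroup of SL(2,ℝ) and let z₀ ≠ z₁ be points of ℍ with Re(z₀) = Re(z₁) = r. Suppose the Dirichlet sets coincide: D(Γ,z₀) = D(Γ,z₁) =: P. Then for every γ ∈ Γ and every v ∈ P with γ•v ∈ P, either γ•v = v, or Re(γ•v) = 2r − Re(v) and Im(γ•v) = Im(v); that is, each boundary point of a Double Dirichlet domain is identified with its reflection in the vertical line through the two centers. -/
open UpperHalfPlane Matrix Complex
open scoped MatrixGroups

lemma dist_sq_expand (w z : ℍ) :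
    (dist (w : ℂ) (z : ℂ)) ^ 2 = (w.re - z.re) ^ 2 + (w.im - z.im) ^ 2 := by
  rw [Complex.dist_eq, Complex.sq_norm, Complex.normSq_apply]
  simp [Complex.sub_re, Complex.sub_im, UpperHalfPlane.coe_re, UpperHalfPlane.coe_im]
  ring

/-- Key geometric lemma: if `w` and `v` are equidistant from two distinct points on
the vertical line `Re = r`, then `w = v` or `w` is the reflection of `v`. -/
lemma equidistant_reflection (z₀ z₁ v w : ℍ) (r : ℝ)
    (hne : z₀ ≠ z₁) (h₀ : z₀.re = r) (h₁ : z₁.re = r)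
    (hd₀ : dist w z₀ = dist v z₀) (hd₁ : dist w z₁ = dist v z₁) :
    w = v ∨ (w.re = 2 * r - v.re ∧ w.im = v.im) := by
  have ht : z₀.im ≠ z₁.im := by
    intro h
    exact hne (UpperHalfPlane.ext (Complex.ext (h₀.trans h₁.symm) h))
  have ha : (0:ℝ) < v.im := v.im_pos
  have hb : (0:ℝ) < w.im := w.im_pos
  have ht₀ : (0:ℝ) < z₀.im := z₀.im_pos
  have ht₁ : (0:ℝ) < z₁.im := z₁.im_pos
  -- turn the distance equalities into polynomial equations via cosh
  have key : ∀ z : ℍ, dist w z = dist v z →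
      v.im * ((w.re - z.re) ^ 2 + (w.im - z.im) ^ 2)
        = w.im * ((v.re - z.re) ^ 2 + (v.im - z.im) ^ 2) := by
    intro z hz
    have hc := congrArg Real.cosh hz
    rw [UpperHalfPlane.cosh_dist, UpperHalfPlane.cosh_dist, dist_sq_expand, dist_sq_expand] at hc
    have hz' : (0:ℝ) < z.im := z.im_pos
    field_simp at hc
    nlinarith [hc, hz'.ne', ha, hb]
  have E0 := key z₀ hd₀
  have E1 := key z₁ hd₁
  rw [h₀] at E0
  rw [h₁] at E1
  -- first derive equality of imaginary parts
  have him : w.im = v.im := by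
    have h3 : (z₁.im - z₀.im) * ((z₀.im + z₁.im) * (w.im - v.im)) = 0 := by
      linear_combination E0 - E1
    rcases mul_eq_zero.1 h3 with h | h
    · exact absurd (by linarith : z₀.im = z₁.im) ht
    rcases mul_eq_zero.1 h with h | h
    · nlinarith
    · linarith
  -- then the real parts
  have hre : (w.re - v.re) * (w.re + v.re - 2 * r) = 0 := by
    have : v.im * ((w.re - r) ^ 2 - (v.re - r) ^ 2) = 0 := by
      rw [him] at E0
      linear_combination E0
    have h4 : (w.re - r) ^ 2 - (v.re - r) ^ 2 = 0 := by
      rcases mul_eq_zero.1 this with h | h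
      · exact absurd h ha.ne'
      · exact h
    nlinarith [h4]
  rcases mul_eq_zero.1 hre with h | h
  · left
    have : w.re = v.re := by linarith
    exact UpperHalfPlane.ext (Complex.ext this him)
  · right
    exact ⟨by linarith, him⟩

/-- In a Double Dirichlet domain (a common Dirichlet set for two distinct centers on the
vertical line `{Re(z) = r}`), every point of the domain is identified by each `γ ∈ Γ`
either with itself or with its reflection in that vertical line. -/
theorem double_dirichlet_side_pairing_reflection (Γ : Subgroup SL(2, ℝ))
    (z₀ z₁ : ℍ) (r : ℝ) (hne : z₀ ≠ z₁) (h₀ : z₀.re = r) (h₁ : z₁.re = r)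
    (P : Set ℍ) (hP₀ : P = dirichletSet Γ z₀) (hP₁ : P = dirichletSet Γ z₁) :
    ∀ γ ∈ Γ, ∀ v ∈ P, γ • v ∈ P →
      γ • v = v ∨ ((γ • v).re = 2 * r - v.re ∧ (γ • v).im = v.im) := by
  intro γ hγ v hv hgv
  have hdist : ∀ z : ℍ, P = dirichletSet Γ z → dist (γ • v) z = dist v z := by
    intro z hz
    have h1 : dist v z ≤ dist v (γ⁻¹ • z) := (hz ▸ hv) γ⁻¹ (inv_mem hγ)
    have h2 : dist (γ • v) z ≤ dist (γ • v) (γ • z) := (hz ▸ hgv) γ hγ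
    rw [dist_smul] at h2
    rw [show dist v (γ⁻¹ • z) = dist (γ • v) z by
      rw [← dist_smul γ v (γ⁻¹ • z), smul_inv_smul]] at h1
    linarith
  exact equidistant_reflection z₀ z₁ v (γ • v) r hne h₀ h₁ (hdist z₀ hP₀) (hdist z₁ hP₁)
end

section
/- Let Γ be a discrete subgroup of SL(2,ℝ) containing T = [[1,1],[0,1]], let x₀ ∈ ℝ, and let F(Γ,x₀) be the Ford set of Γ over the strip [x₀, x₀+1]. If F(Γ,x₀) equals the Dirichlet set D(Γ,z₀) for some z₀ ∈ ℍ (i.e. Γ admits a DF domain), then Re(z₀) = x₀ + 1/2; that is, the Dirichlet center lies on the vertical bisecting line of the strip. -/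
open UpperHalfPlane Matrix Complex
open scoped MatrixGroups

/-- The topology on `SL(2,ℝ)` induced from the space of 2×2 real matrices. -/
def slTopology : TopologicalSpace SL(2, ℝ) :=
  TopologicalSpace.induced (fun g => (g : Matrix (Fin 2) (Fin 2) ℝ)) inferInstance

/-- A subgroup of `SL(2,ℝ)` is discrete if it carries the discrete topology as a
subspace of `SL(2,ℝ)`. -/
def IsDiscreteSubgroup (Γ : Subgroup SL(2, ℝ)) : Prop :=
  @DiscreteTopology Γ (TopologicalSpace.induced (Subtype.val : Γ → SL(2, ℝ)) slTopology)

/-- The Ford set of a subgroup `Γ ≤ SL(2,ℝ)` over the vertical strip `[x₀, x₀+1]`: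
the points of the strip lying on or exterior to every isometric circle of `Γ`. -/
def fordSet (Γ : Subgroup SL(2, ℝ)) (x₀ : ℝ) : Set ℍ :=
  {z : ℍ | x₀ ≤ z.re ∧ z.re ≤ x₀ + 1 ∧
    ∀ g ∈ Γ, g 1 0 ≠ 0 → 1 ≤ ‖(g 1 0 : ℂ) * (z : ℂ) + (g 1 1 : ℂ)‖}

/-- The parabolic translation `T = [[1,1],[0,1]]` in `SL(2,ℝ)`. -/
def T : SL(2, ℝ) :=
  ⟨!![1, 1; 0, 1], by norm_num [Matrix.det_fin_two_of]⟩

open Filter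

lemma T_smul_coe (z : ℍ) : ((T • z : ℍ) : ℂ) = (z : ℂ) + 1 := by
  rw [UpperHalfPlane.specialLinearGroup_apply]
  simp [T]

lemma Tinv_smul_coe (z : ℍ) : ((T⁻¹ • z : ℍ) : ℂ) = (z : ℂ) - 1 := by
  rw [UpperHalfPlane.specialLinearGroup_apply]
  rw [Matrix.SpecialLinearGroup.SL2_inv_expl]
  simp [T, Matrix.SpecialLinearGroup.SL2_inv_expl]
  ring

lemma bisector (w z z' : ℍ) (t : ℝ) (hz' : (z' : ℂ) = (z : ℂ) + t)
    (h : dist w z ≤ dist w z') : 2 * t * (w.re - z.re) ≤ t ^ 2 := by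
  have him : z'.im = z.im := by
    rw [← UpperHalfPlane.coe_im, hz']; simp
  rw [UpperHalfPlane.dist_eq, UpperHalfPlane.dist_eq, him] at h
  have hD : 0 < 2 * Real.sqrt (w.im * z.im) := by positivity
  have h1 : Real.arsinh (dist (w : ℂ) (z : ℂ) / (2 * Real.sqrt (w.im * z.im))) ≤
      Real.arsinh (dist (w : ℂ) (z' : ℂ) / (2 * Real.sqrt (w.im * z.im))) := by linarith
  have h2 : dist (w : ℂ) (z : ℂ) ≤ dist (w : ℂ) (z' : ℂ) :=
    (div_le_div_iff_of_pos_right hD).mp (Real.arsinh_le_arsinh.mp h1)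
  rw [Complex.dist_eq, Complex.dist_eq, hz'] at h2
  have h3 : ‖(w : ℂ) - z‖ ^ 2 ≤ ‖(w : ℂ) - (z + t)‖ ^ 2 :=
    pow_le_pow_left₀ (norm_nonneg _) h2 2
  rw [Complex.sq_norm, Complex.sq_norm] at h3
  simp only [Complex.normSq_apply, Complex.sub_re, Complex.sub_im, Complex.add_re,
    Complex.add_im, Complex.ofReal_re, Complex.ofReal_im] at h3
  rw [← UpperHalfPlane.coe_re w, ← UpperHalfPlane.coe_re z]
  nlinarith [h3]

lemma conj_entries (h : SL(2,ℝ)) :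
    ((h * T * h⁻¹ : SL(2,ℝ)) : Matrix (Fin 2) (Fin 2) ℝ) =
      !![1 - h 0 0 * h 1 0, (h 0 0)^2; -(h 1 0)^2, 1 + h 0 0 * h 1 0] := by
  have hdet : h 0 0 * h 1 1 - h 0 1 * h 1 0 = 1 := by
    have := h.2; rwa [Matrix.det_fin_two] at this
  ext i j
  rw [Matrix.SpecialLinearGroup.coe_mul, Matrix.SpecialLinearGroup.coe_mul,
    Matrix.SpecialLinearGroup.coe_inv, Matrix.adjugate_fin_two]
  fin_cases i <;> fin_cases j <;>
    simp [Matrix.mul_apply, Fin.sum_univ_two, T] <;> nlinarith [hdet]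

lemma discrete_eventually (Γ : Subgroup SL(2, ℝ)) (hdisc : IsDiscreteSubgroup Γ)
    (x : Γ) (s : ℕ → Γ)
    (hm : Tendsto (fun n => (((s n : SL(2,ℝ)) : Matrix (Fin 2) (Fin 2) ℝ))) atTop
      (nhds ((x : SL(2,ℝ)) : Matrix (Fin 2) (Fin 2) ℝ))) : ∃ n, s n = x := by
  set τ : TopologicalSpace Γ :=
    TopologicalSpace.induced (Subtype.val : Γ → SL(2, ℝ)) slTopology with hτ
  have hτ2 : τ = TopologicalSpace.induced
      (fun γ : Γ => ((γ : SL(2,ℝ)) : Matrix (Fin 2) (Fin 2) ℝ)) inferInstance := by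
    rw [hτ, slTopology, induced_compose]; rfl
  have h1 : @Filter.Tendsto ℕ Γ s atTop (@nhds Γ τ x) := by
    rw [hτ2, nhds_induced, Filter.tendsto_comap_iff]
    exact hm
  have h2 : @nhds Γ τ x = pure x := by rw [@nhds_discrete Γ τ hdisc]
  rw [h2, Filter.tendsto_pure] at h1
  exact h1.exists

def pt (r : ℝ) : ℍ := ⟨(r : ℂ) + 2 * Complex.I, by norm_num⟩

lemma pt_coe (r : ℝ) : ((pt r : ℍ) : ℂ) = (r : ℂ) + 2 * Complex.I := rfl

lemma pt_re (r : ℝ) : (pt r).re = r := by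
  rw [← UpperHalfPlane.coe_re, pt_coe]; simp

lemma c_lower_bound (Γ : Subgroup SL(2, ℝ)) (hdisc : IsDiscreteSubgroup Γ) (hT : T ∈ Γ) :
    ∀ g ∈ Γ, g 1 0 ≠ 0 → 1/2 < |g 1 0| := by
  intro g hg hc0
  by_contra hle
  push_neg at hle
  set s : ℕ → SL(2,ℝ) := fun n => (fun h => h * T * h⁻¹)^[n] g with hs
  have hsucc : ∀ n, s (n+1) = s n * T * (s n)⁻¹ := fun n =>
    Function.iterate_succ_apply' _ _ _
  have hmem : ∀ n, s n ∈ Γ := by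
    intro n; induction n with
    | zero => exact hg
    | succ n ih => rw [hsucc]; exact Γ.mul_mem (Γ.mul_mem ih hT) (Γ.inv_mem ih)
  set a : ℕ → ℝ := fun n => ((s n : SL(2,ℝ)) : Matrix (Fin 2) (Fin 2) ℝ) 0 0 with haa
  set c : ℕ → ℝ := fun n => ((s n : SL(2,ℝ)) : Matrix (Fin 2) (Fin 2) ℝ) 1 0 with hcc
  have hmat : ∀ n, ((s (n+1) : SL(2,ℝ)) : Matrix (Fin 2) (Fin 2) ℝ) =
      !![1 - a n * c n, (a n)^2; -(c n)^2, 1 + a n * c n] := by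
    intro n; rw [hsucc]; exact conj_entries (s n)
  have ha : ∀ n, a (n+1) = 1 - a n * c n := by
    intro n; rw [haa]; simp only [hmat n]; simp [a]
  have hc : ∀ n, c (n+1) = -(c n)^2 := by
    intro n; rw [hcc]; simp only [hmat n]; simp [c]
  have hb : ∀ n, ((s (n+1) : SL(2,ℝ)) : Matrix (Fin 2) (Fin 2) ℝ) 0 1 = (a n)^2 := by
    intro n; simp only [hmat n]; simp
  have hd : ∀ n, ((s (n+1) : SL(2,ℝ)) : Matrix (Fin 2) (Fin 2) ℝ) 1 1 = 1 + a n * c n := by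
    intro n; simp only [hmat n]; simp
  have hc0' : |c 0| ≤ 1/2 := hle
  have hcne : ∀ n, c n ≠ 0 := by
    intro n; induction n with
    | zero => exact hc0
    | succ n ih => rw [hc n]; simpa using pow_ne_zero 2 ih
  have hcb : ∀ n, |c n| ≤ (1/2)^n * |c 0| := by
    intro n; induction n with
    | zero => simp
    | succ n ih =>
      have hpow : ((1:ℝ)/2)^n ≤ 1 := pow_le_one₀ (by norm_num) (by norm_num)
      have h1 : |c (n+1)| = |c n| * |c n| := by
        rw [hc n, abs_neg, sq, abs_mul]
      have hcnh : |c n| ≤ 1/2 := by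
        have hx := mul_nonneg (sub_nonneg.2 hpow) (abs_nonneg (c 0))
        nlinarith [ih, hc0', abs_nonneg (c n)]
      calc |c (n+1)| = |c n| * |c n| := h1
        _ ≤ ((1/2)^n * |c 0|) * (1/2) :=
            mul_le_mul ih hcnh (abs_nonneg _) (by positivity)
        _ = (1/2)^(n+1) * |c 0| := by ring
  have hchalf : ∀ n, |c n| ≤ 1/2 := by
    intro n
    have hpow : ((1:ℝ)/2)^n ≤ 1 := pow_le_one₀ (by norm_num) (by norm_num)
    nlinarith [hcb n, abs_nonneg (c 0)]
  set u : ℕ → ℝ := fun n => |a n * c n| with huu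
  have hu : ∀ n, u (n+1) ≤ (1 + u n) * (c n)^2 := by
    intro n
    have : u (n+1) = |1 - a n * c n| * (c n)^2 := by
      rw [huu]; simp only [ha n, hc n, abs_mul, abs_neg]
      rw [_root_.abs_pow, _root_.sq_abs]
    rw [this]
    have h2 : |1 - a n * c n| ≤ 1 + u n := by
      calc |1 - a n * c n| ≤ |(1:ℝ)| + |a n * c n| := abs_sub _ _
        _ = 1 + u n := by rw [abs_one]
    exact mul_le_mul_of_nonneg_right h2 (sq_nonneg _)
  have hcsq : ∀ n, (c n)^2 ≤ 1/4 := by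
    intro n
    have := hchalf n
    nlinarith [abs_nonneg (c n), _root_.sq_abs (c n)]
  have hu4 : ∀ n, u (n+1) ≤ 1/4 + u n / 4 := by
    intro n
    have h1 := hu n
    have h2 := hcsq n
    have h3 : 0 ≤ u n := abs_nonneg _
    nlinarith [sq_nonneg (c n)]
  have hgeo : ∀ n, u n ≤ (1/4)^n * u 0 + 1/3 := by
    intro n; induction n with
    | zero =>
      simp only [pow_zero, one_mul]
      linarith
    | succ n ih =>
      have := hu4 n
      have hp : (0:ℝ) ≤ (1/4)^n := by positivity
      rw [pow_succ]
      nlinarith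
  obtain ⟨N, hN⟩ : ∃ N, (1/4:ℝ)^N * u 0 < 2/3 := by
    have h1 : Tendsto (fun n : ℕ => (1/4:ℝ)^n * u 0) atTop (nhds (0 * u 0)) :=
      (tendsto_pow_atTop_nhds_zero_of_lt_one (by norm_num) (by norm_num)).mul_const _
    rw [zero_mul] at h1
    exact (h1.eventually_lt_const (by norm_num)).exists
  have hone : ∀ n, N ≤ n → u n ≤ 1 := by
    intro n hn
    have h1 : (1/4:ℝ)^n * u 0 ≤ (1/4)^N * u 0 :=
      mul_le_mul_of_nonneg_right
        (pow_le_pow_of_le_one (by norm_num) (by norm_num) hn) (abs_nonneg _)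
    linarith [hgeo n]
  have hfast : ∀ n, N ≤ n → u (n+1) ≤ (1/2)^(n+1) := by
    intro n hn
    have h1 : |c n| ≤ (1/2)^(n+1) := by
      have := hcb n
      rw [pow_succ]
      nlinarith [abs_nonneg (c n), pow_nonneg (by norm_num : (0:ℝ) ≤ 1/2) n]
    have h2 : (c n)^2 ≤ ((1/2:ℝ)^(n+1))^2 := by
      rw [← _root_.sq_abs (c n)]
      exact pow_le_pow_left₀ (abs_nonneg _) h1 2
    have h3 : u (n+1) ≤ 2 * ((1/2:ℝ)^(n+1))^2 := by
      have := hu n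
      have := hone n hn
      nlinarith [sq_nonneg (c n)]
    have h4 : 2 * ((1/2:ℝ)^(n+1))^2 ≤ (1/2)^(n+1) := by
      have : ((1/2:ℝ)^(n+1))^2 = (1/2)^(n+1) * (1/2)^(n+1) := sq _
      rw [this]
      have h5 : (1/2:ℝ)^(n+1) ≤ 1/2 := by
        calc (1/2:ℝ)^(n+1) ≤ (1/2)^1 := pow_le_pow_of_le_one (by norm_num) (by norm_num) (by omega)
          _ = 1/2 := pow_one _
      nlinarith [pow_nonneg (by norm_num : (0:ℝ) ≤ 1/2) (n+1)]
    linarith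
  have hu0 : Tendsto u atTop (nhds 0) := by
    apply squeeze_zero' (g := fun n => (1/2:ℝ)^n)
    · exact Filter.Eventually.of_forall (fun n => abs_nonneg _)
    · rw [eventually_atTop]
      refine ⟨N+1, fun n hn => ?_⟩
      obtain ⟨m, rfl⟩ := Nat.exists_eq_add_of_le hn
      have hnm : N + 1 + m = (N + m) + 1 := by omega
      rw [hnm]
      exact hfast _ (by omega)
    · exact tendsto_pow_atTop_nhds_zero_of_lt_one (by norm_num) (by norm_num)
  have hctend : Tendsto c atTop (nhds 0) := by
    refine squeeze_zero_norm (a := fun n => (1/2:ℝ)^n * |c 0|) (fun n => ?_) ?_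
    · rw [Real.norm_eq_abs]; exact hcb n
    · have := (tendsto_pow_atTop_nhds_zero_of_lt_one
        (by norm_num : (0:ℝ) ≤ 1/2) (by norm_num : (1/2:ℝ) < 1)).mul_const |c 0|
      rwa [zero_mul] at this
  have hactend : Tendsto (fun n => a n * c n) atTop (nhds 0) := by
    refine squeeze_zero_norm (a := u) (fun n => ?_) hu0
    rw [Real.norm_eq_abs]
  have hatend : Tendsto a atTop (nhds 1) := by
    rw [← Filter.tendsto_add_atTop_iff_nat 1]
    have : (fun n => a (n + 1)) = fun n => 1 - a n * c n := by
      funext n; exact ha n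
    rw [this]
    have := (tendsto_const_nhds (x := (1:ℝ)) (f := atTop)).sub hactend
    simpa using this
  -- assemble the matrix convergence
  have hmt : Tendsto (fun n => ((s n : SL(2,ℝ)) : Matrix (Fin 2) (Fin 2) ℝ)) atTop
      (nhds ((T : SL(2,ℝ)) : Matrix (Fin 2) (Fin 2) ℝ)) := by
    refine tendsto_pi_nhds.2 ?_
    intro i
    refine tendsto_pi_nhds.2 ?_
    intro j
    fin_cases i <;> fin_cases j
    · simpa [T] using hatend
    · -- entry 0 1
      have : Tendsto (fun n => ((s (n+1) : SL(2,ℝ)) : Matrix (Fin 2) (Fin 2) ℝ) 0 1)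
          atTop (nhds 1) := by
        have heq : (fun n => ((s (n+1) : SL(2,ℝ)) : Matrix (Fin 2) (Fin 2) ℝ) 0 1)
            = fun n => (a n)^2 := by funext n; exact hb n
        rw [heq]
        have := hatend.pow 2
        simpa using this
      have h2 := (Filter.tendsto_add_atTop_iff_nat
        (f := fun n => ((s n : SL(2,ℝ)) : Matrix (Fin 2) (Fin 2) ℝ) 0 1)
        (l := nhds 1) 1).mp this
      simpa [T] using h2
    · simpa [T] using hctend
    · have : Tendsto (fun n => ((s (n+1) : SL(2,ℝ)) : Matrix (Fin 2) (Fin 2) ℝ) 1 1)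
          atTop (nhds 1) := by
        have heq : (fun n => ((s (n+1) : SL(2,ℝ)) : Matrix (Fin 2) (Fin 2) ℝ) 1 1)
            = fun n => 1 + a n * c n := by funext n; exact hd n
        rw [heq]
        have := (tendsto_const_nhds (x := (1:ℝ)) (f := atTop)).add hactend
        simpa using this
      have h2 := (Filter.tendsto_add_atTop_iff_nat
        (f := fun n => ((s n : SL(2,ℝ)) : Matrix (Fin 2) (Fin 2) ℝ) 1 1)
        (l := nhds 1) 1).mp this
      simpa [T] using h2
  obtain ⟨n, hn⟩ := discrete_eventually Γ hdisc ⟨T, hT⟩ (fun n => ⟨s n, hmem n⟩) hmt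
  have : s n = T := congrArg Subtype.val hn
  have hczero : c n = 0 := by
    rw [hcc]; simp only [this]; simp [T]
  exact hcne n hczero

/-- If a discrete subgroup `Γ ≤ SL(2,ℝ)` containing `T` admits a DF domain, i.e. its
Ford set over the strip `[x₀, x₀+1]` equals its Dirichlet set with center `z₀`, then the
Dirichlet center lies on the vertical bisecting line of the strip. -/
theorem re_center_eq_of_df_domain (Γ : Subgroup SL(2, ℝ))
    (hdisc : IsDiscreteSubgroup Γ) (hT : T ∈ Γ) (x₀ : ℝ) (z₀ : ℍ)
    (h : fordSet Γ x₀ = dirichletSet Γ z₀) :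
    z₀.re = x₀ + 1 / 2 := by
  have hcl := c_lower_bound Γ hdisc hT
  have hford : ∀ r : ℝ, x₀ ≤ r → r ≤ x₀ + 1 → pt r ∈ fordSet Γ x₀ := by
    intro r h1 h2
    refine ⟨by rw [pt_re]; exact h1, by rw [pt_re]; exact h2, ?_⟩
    intro g hg hc
    have hcabs := hcl g hg hc
    have him : (((g 1 0 : ℂ)) * ((pt r : ℍ) : ℂ) + (g 1 1 : ℂ)).im
        = g 1 0 * 2 := by
      rw [pt_coe]; simp
    calc (1:ℝ) ≤ |g 1 0 * 2| := by rw [abs_mul]; norm_num; linarith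
      _ = |(((g 1 0 : ℂ)) * ((pt r : ℍ) : ℂ) + (g 1 1 : ℂ)).im| := by rw [him]
      _ ≤ ‖_‖ := Complex.abs_im_le_norm _
  have hw1 : pt x₀ ∈ dirichletSet Γ z₀ := by
    rw [← h]; exact hford x₀ le_rfl (by linarith)
  have hw2 : pt (x₀ + 1) ∈ dirichletSet Γ z₀ := by
    rw [← h]; exact hford (x₀ + 1) (by linarith) le_rfl
  have hd1 := hw1 T⁻¹ (Γ.inv_mem hT)
  have hd2 := hw2 T hT
  have hb1 := bisector _ z₀ (T⁻¹ • z₀) (-1)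
    (by rw [Tinv_smul_coe]; push_cast; ring) hd1
  have hb2 := bisector _ z₀ (T • z₀) 1
    (by rw [T_smul_coe]; push_cast; ring) hd2
  rw [pt_re] at hb1
  rw [pt_re] at hb2
  nlinarith [hb1, hb2]
end

section
/- Let γ₂ = [[0, −1/√11],[√11, 0]] ∈ SL(2,ℝ). For every natural number n ≥ 1 with n ≠ 11, γ₂ does not normalize the image of Γ₀(n) in SL(2,ℝ): there exists A ∈ Γ₀(n) such that γ₂ · A · γ₂⁻¹ does not lie in the image of Γ₀(n) under the inclusion SL(2,ℤ) → SL(2,ℝ). -/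
open Matrix
open scoped MatrixGroups

/-- The matrix `γ₂ = [[0, −1/√11],[√11, 0]]` in `SL(2,ℝ)`. -/
noncomputable def gamma2 : SL(2, ℝ) :=
  ⟨!![0, -1 / Real.sqrt 11; Real.sqrt 11, 0], by
    have h : Real.sqrt 11 ≠ 0 := by positivity
    rw [Matrix.det_fin_two_of]
    field_simp
    norm_num⟩

/-- The entrywise embedding `SL(2,ℤ) →* SL(2,ℝ)`. -/
def mapSL : SL(2, ℤ) →* SL(2, ℝ) :=
  Matrix.SpecialLinearGroup.map (Int.castRingHom ℝ)

set_option linter.unnecessarySeqFocus false in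
/-- Conjugation by `gamma2` sends `[[a,b],[c,d]]` to `[[d, -c/11],[-11b, a]]`. -/
lemma conj_eq (A : SL(2, ℤ)) :
    ((gamma2 * mapSL A * gamma2⁻¹ : SL(2,ℝ)) : Matrix (Fin 2) (Fin 2) ℝ) =
      !![(A 1 1 : ℝ), -(A 1 0 : ℝ)/11; -11*(A 0 1 : ℝ), (A 0 0 : ℝ)] := by
  have h : Real.sqrt 11 ≠ 0 := by positivity
  rw [Matrix.SpecialLinearGroup.coe_mul, Matrix.SpecialLinearGroup.coe_mul, Matrix.SpecialLinearGroup.coe_inv]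
  have hA : ((mapSL A : SL(2,ℝ)) : Matrix (Fin 2) (Fin 2) ℝ) =
      !![(A 0 0 : ℝ), (A 0 1 : ℝ); (A 1 0 : ℝ), (A 1 1 : ℝ)] := by
    ext i j; fin_cases i <;> fin_cases j <;> simp [mapSL]
  rw [hA]
  show (!![0, -1 / Real.sqrt 11; Real.sqrt 11, 0] * _) *
      adjugate !![0, -1 / Real.sqrt 11; Real.sqrt 11, 0] = _
  rw [Matrix.adjugate_fin_two]
  ext i j
  fin_cases i <;> fin_cases j <;>
    (try simp [Matrix.mul_apply, Fin.sum_univ_two]) <;>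
    (try field_simp) <;> ring_nf <;>
    (try rw [show Real.sqrt 11 ^ 2 = 11 from Real.sq_sqrt (by norm_num)]) <;> ring

/-- For every `n ≥ 1` with `n ≠ 11`, the matrix `γ₂ = [[0,−1/√11],[√11,0]]` fails to
normalize the image of `Γ₀(n)` in `SL(2,ℝ)`. -/
theorem gamma2_not_normalizes_Gamma0 (n : ℕ) (hn : 1 ≤ n) (hne : n ≠ 11) :
    ∃ A ∈ CongruenceSubgroup.Gamma0 n,
      gamma2 * mapSL A * gamma2⁻¹ ∉
        Subgroup.map mapSL (CongruenceSubgroup.Gamma0 n) := by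
  rcases eq_or_ne n 1 with rfl | hn1
  · -- n = 1 : use the lower-triangular matrix [[1,0],[1,1]]
    refine ⟨(⟨!![1, 0; 1, 1], by simp [Matrix.det_fin_two_of]⟩ : SL(2, ℤ)), ?_, ?_⟩
    · erw [CongruenceSubgroup.Gamma0_mem]; exact Subsingleton.elim _ _
    · rintro ⟨B, -, hB⟩
      have hmat : ((mapSL B : SL(2,ℝ)) : Matrix (Fin 2) (Fin 2) ℝ) =
          !![(1 : ℝ), -(1 : ℝ)/11; -11*(0 : ℝ), (1 : ℝ)] := by
        rw [hB]; erw [conj_eq]; norm_num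
      have h01 := congrFun (congrFun hmat 0) 1
      simp [mapSL] at h01
      -- h01 : (B 0 1 : ℝ) = -(1)/11
      have : ((11 * B 0 1 : ℤ) : ℝ) = -1 := by push_cast; linarith
      have h2 : (11 : ℤ) * B 0 1 = -1 := by exact_mod_cast this
      omega
  · -- n ≥ 2, n ≠ 11 : use T = [[1,1],[0,1]]
    refine ⟨(⟨!![1, 1; 0, 1], by simp [Matrix.det_fin_two_of]⟩ : SL(2, ℤ)), ?_, ?_⟩
    · erw [CongruenceSubgroup.Gamma0_mem]; simp
    · rintro ⟨B, hBmem, hB⟩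
      have hmat : ((mapSL B : SL(2,ℝ)) : Matrix (Fin 2) (Fin 2) ℝ) =
          !![(1 : ℝ), -(0 : ℝ)/11; -11*(1 : ℝ), (1 : ℝ)] := by
        rw [hB]; erw [conj_eq]; norm_num
      have h10 := congrFun (congrFun hmat 1) 0
      simp [mapSL] at h10
      -- h10 : (B 1 0 : ℝ) = -11
      have h2 : B 1 0 = -11 := by exact_mod_cast h10
      rw [SetLike.mem_coe, CongruenceSubgroup.Gamma0_mem, h2] at hBmem
      have : ((11 : ℤ) : ZMod n) = 0 := by
        have := hBmem; push_cast at this ⊢; linear_combination -this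
      have hdvd : (n : ℤ) ∣ 11 := by
        rwa [ZMod.intCast_zmod_eq_zero_iff_dvd] at this
      have hdvd' : n ∣ 11 := by exact_mod_cast hdvd
      rcases Nat.Prime.eq_one_or_self_of_dvd (by norm_num) n hdvd' with h | h <;> omega
end
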